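/- Let f : X → ℝ ∪ {+∞} be proper lower semicontinuous on a Banach space X, x̄ ∈ dom f, u ∈ X, and suppose f(x̄) = liminf_{t↘0} f(x̄+tu). Then the upper radial subderivative satisfies f^r₊(x̄;u) ≤ f^♮(x̄;u) := inf_{α≥0} limsup_{x →_u x̄} f^r(x; u + α(x̄−x)), where x →_u x̄ means x = x̄ + t v with t ↘ 0 and v → u. -/

import Mathlib

open Filter Set Topology

variable {X : Type*} [NormedAddCommGroup X] [NormedSpace ℝ X] [CompleteSpace X]

/-- Radial subderivative (lower right Dini derivative in the direction `u`)
of an extended-real-valued function, set to `⊥` outside the domain. -/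
noncomputable def frE (f : X → EReal) (x u : X) : EReal :=
  if f x = ⊤ then ⊥ else
    Filter.liminf (fun t : ℝ => (f (x + t • u) - f x) * (((t⁻¹ : ℝ)) : EReal))
      (nhdsWithin 0 (Set.Ioi 0))

/-- Upper radial subderivative, set to `⊥` outside the domain. -/
noncomputable def frEplus (f : X → EReal) (x u : X) : EReal :=
  if f x = ⊤ then ⊥ else
    Filter.limsup (fun t : ℝ => (f (x + t • u) - f x) * (((t⁻¹ : ℝ)) : EReal))
      (nhdsWithin 0 (Set.Ioi 0))

/-- Directional upper regularization `f^♮(x̄;u)`: the infimum over `α ≥ 0` of the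
limsup of `f^r(x; u + α(x̄ - x))` as `x = x̄ + t v → x̄` with `t ↘ 0`, `v → u`. -/
noncomputable def fnatE (f : X → EReal) (xb u : X) : EReal :=
  ⨅ (α : ℝ) (_ : 0 ≤ α),
    Filter.limsup
      (fun p : ℝ × X => frE f (xb + p.1 • p.2) (u + α • (xb - (xb + p.1 • p.2))))
      ((nhdsWithin 0 (Set.Ioi 0)) ×ˢ nhds u)

/-- Full upper regularization `f^♮♮(x̄;u)`: the infimum over `α ≥ 0` of the
limsup of `f^r(x; u + α(x̄ - x))` as `x → x̄`. -/
noncomputable def fnatnatE (f : X → EReal) (xb u : X) : EReal :=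
  ⨅ (α : ℝ) (_ : 0 ≤ α),
    Filter.limsup (fun x : X => frE f x (u + α • (xb - x))) (nhds xb)

set_option linter.unusedSectionVars false

private lemma quot_lt_iff {d : EReal} {h m : ℝ} (hh : 0 < h) :
    d * ((h⁻¹ : ℝ) : EReal) < (m : EReal) ↔ d < ((m * h : ℝ) : EReal) := by
  have e : d * ((h⁻¹ : ℝ) : EReal) = d / (h : EReal) := by
    rw [EReal.coe_inv, div_eq_mul_inv]
  rw [e, ← not_le, ← not_le, EReal.le_div_iff_mul_le (by exact_mod_cast hh) (EReal.coe_ne_top h),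
    ← EReal.coe_mul]

private lemma lt_quot_iff {d : EReal} {h m : ℝ} (hh : 0 < h) :
    (m : EReal) < d * ((h⁻¹ : ℝ) : EReal) ↔ ((m * h : ℝ) : EReal) < d := by
  have e : d * ((h⁻¹ : ℝ) : EReal) = d / (h : EReal) := by
    rw [EReal.coe_inv, div_eq_mul_inv]
  rw [e, ← not_le, ← not_le, EReal.div_le_iff_le_mul (by exact_mod_cast hh) (EReal.coe_ne_top h),
    ← EReal.coe_mul, mul_comm h m]

private lemma mvt_ereal (g : ℝ → EReal) (hg : LowerSemicontinuous g) (hgbot : ∀ t, g t ≠ ⊥)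
    {a b m : ℝ} (hab : a < b) (hga : g a ≠ ⊤)
    (hslope : g a + ((m * (b - a) : ℝ) : EReal) < g b) :
    ∃ c, a ≤ c ∧ c < b ∧ g c ≠ ⊤ ∧
      (m : EReal) ≤ Filter.liminf (fun h : ℝ => (g (c + h) - g c) * ((h⁻¹ : ℝ) : EReal))
        (nhdsWithin 0 (Set.Ioi 0)) := by
  by_contra hcon
  push_neg at hcon
  set F : ℝ → EReal := fun x => g x + ((m * (a - x) : ℝ) : EReal) with hF
  have hFlsc : LowerSemicontinuous F := by
    refine LowerSemicontinuous.add' hg ?_ ?_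
    · exact (continuous_coe_real_ereal.comp (by continuity)).lowerSemicontinuous
    · intro x
      exact EReal.continuousAt_add (Or.inr (EReal.coe_ne_bot _)) (Or.inr (EReal.coe_ne_top _))
  set S : Set ℝ := Icc a b ∩ F ⁻¹' Iic (g a) with hS
  have hSclosed : IsClosed S := isClosed_Icc.inter (hFlsc.isClosed_preimage _)
  have haS : a ∈ S := by
    refine ⟨⟨le_refl a, hab.le⟩, ?_⟩
    show g a + ((m * (a - a) : ℝ) : EReal) ≤ g a
    rw [sub_self, mul_zero, EReal.coe_zero, add_zero]
  have hSbdd : BddAbove S := ⟨b, fun x hx => hx.1.2⟩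
  set c := sSup S with hc
  have hcS : c ∈ S := hSclosed.csSup_mem ⟨a, haS⟩ hSbdd
  have hac : a ≤ c := hcS.1.1
  have hcb : c ≤ b := hcS.1.2
  have hcle : g c + ((m * (a - c) : ℝ) : EReal) ≤ g a := hcS.2
  have hgc_top : g c ≠ ⊤ := by
    intro h
    rw [h, EReal.top_add_coe] at hcle
    exact hga (top_le_iff.1 hcle)
  have hcb' : c < b := by
    rcases lt_or_eq_of_le hcb with h | h
    · exact h
    · exfalso
      rw [h] at hcle
      have h2 := add_le_add_left hcle ((m * (b - a) : ℝ) : EReal)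
      rw [add_assoc, ← EReal.coe_add] at h2
      have h0 : m * (a - b) + m * (b - a) = 0 := by ring
      rw [h0, EReal.coe_zero, add_zero] at h2
      exact absurd (lt_of_le_of_lt h2 hslope) (lt_irrefl _)
  have hfreq : ∃ᶠ h in nhdsWithin (0:ℝ) (Set.Ioi 0),
      (g (c + h) - g c) * ((h⁻¹:ℝ):EReal) < (m:EReal) :=
    frequently_lt_of_liminf_lt (by isBoundedDefault) (hcon c hac hcb' hgc_top)
  rw [(nhdsGT_basis (0:ℝ)).frequently_iff] at hfreq
  obtain ⟨h, ⟨hh0, hhb⟩, hquot⟩ := hfreq (b - c) (by linarith)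
  have hd : g (c + h) - g c < ((m * h : ℝ) : EReal) := (quot_lt_iff hh0).1 hquot
  have hgch : g (c + h) < ((m * h : ℝ):EReal) + g c :=
    (EReal.sub_lt_iff (Or.inl (hgbot c)) (Or.inl hgc_top)).1 hd
  have hchS : c + h ∈ S := by
    refine ⟨⟨by linarith, by linarith⟩, ?_⟩
    show g (c + h) + ((m * (a - (c + h)) : ℝ) : EReal) ≤ g a
    have step : g (c + h) + ((m * (a - (c + h)) : ℝ) : EReal)
        ≤ ((m * h : ℝ):EReal) + g c + ((m * (a - (c + h)) : ℝ) : EReal) :=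
      add_le_add_left hgch.le _
    have e2 : ((m * h : ℝ):EReal) + g c + ((m * (a - (c + h)) : ℝ) : EReal)
        = g c + ((m * (a - c) : ℝ) : EReal) := by
      rw [add_comm ((m * h : ℝ):EReal) (g c), add_assoc, ← EReal.coe_add]
      congr 2
      ring
    exact le_trans (e2 ▸ step) hcle
  have hle : c + h ≤ c := le_csSup hSbdd hchS
  linarith

private lemma frE_scale_aux (f : X → EReal) {x u : X} {k m : ℝ} (hk : 0 < k)
    (h : (m : EReal) ≤ Filter.liminf
      (fun t : ℝ => (f (x + t • u) - f x) * ((t⁻¹ : ℝ) : EReal)) (nhdsWithin 0 (Set.Ioi 0))) :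
    ((k * m : ℝ) : EReal) ≤ Filter.liminf
      (fun t : ℝ => (f (x + t • (k • u)) - f x) * ((t⁻¹ : ℝ) : EReal))
      (nhdsWithin 0 (Set.Ioi 0)) := by
  refine EReal.ge_of_forall_gt_iff_ge.1 (fun z hz => ?_)
  have hzr : z < k * m := by exact_mod_cast hz
  have hq : z / k < m := (div_lt_iff₀ hk).2 (by linarith [mul_comm k m])
  have hev : ∀ᶠ t in nhdsWithin (0:ℝ) (Set.Ioi 0),
      ((z / k : ℝ):EReal) < (f (x + t • u) - f x) * ((t⁻¹:ℝ):EReal) :=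
    eventually_lt_of_lt_liminf (lt_of_lt_of_le (by exact_mod_cast hq) h)
  rw [(nhdsGT_basis (0:ℝ)).eventually_iff] at hev
  obtain ⟨η, hη, hball⟩ := hev
  refine le_liminf_of_le (by isBoundedDefault) ?_
  rw [(nhdsGT_basis (0:ℝ)).eventually_iff]
  refine ⟨η / k, by positivity, fun s hs => ?_⟩
  have hs0 : 0 < s := hs.1
  have hkt : k * s ∈ Ioo (0:ℝ) η := ⟨by positivity, by
    have := hs.2
    calc k * s < k * (η / k) := by exact (mul_lt_mul_iff_right₀ hk).2 this
    _ = η := by field_simp⟩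
  have hq2 := hball hkt
  rw [lt_quot_iff (by positivity : (0:ℝ) < k * s)] at hq2
  have e1 : x + s • (k • u) = x + (k * s) • u := by rw [smul_smul, mul_comm]
  have e2 : z / k * (k * s) = z * s := by field_simp
  rw [e2] at hq2
  rw [e1]
  exact le_of_lt ((lt_quot_iff hs0).2 hq2)

/-- If `f` is proper lsc on a Banach space, `x̄ ∈ dom f`, and
`f(x̄) = liminf_{t↘0} f(x̄ + tu)`, then `f^r₊(x̄;u) ≤ f^♮(x̄;u)`. -/
theorem stmt8 (f : X → EReal)
    (hbot : ∀ x, f x ≠ ⊥) (hproper : ∃ x, f x ≠ ⊤)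
    (hlsc : LowerSemicontinuous f)
    (xb : X) (hxb : f xb ≠ ⊤) (u : X)
    (hlim : f xb = Filter.liminf (fun t : ℝ => f (xb + t • u))
      (nhdsWithin 0 (Set.Ioi 0))) :
    frEplus f xb u ≤ fnatE f xb u := by
  classical
  set a0 : ℝ := (f xb).toReal with ha0
  have hfa0 : f xb = (a0 : EReal) := (EReal.coe_toReal hxb (hbot xb)).symm
  rw [frEplus, if_neg hxb, fnatE]
  refine le_iInf fun α => le_iInf fun hα => ?_
  refine EReal.ge_of_forall_gt_iff_ge.1 (fun r hr => ?_)
  refine EReal.ge_of_forall_gt_iff_ge.1 (fun r' hr' => ?_)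
  have hr'r : r' < r := by exact_mod_cast hr'
  by_contra hcon
  rw [not_le] at hcon
  have hev : ∀ᶠ p in (nhdsWithin (0:ℝ) (Set.Ioi 0)) ×ˢ nhds u,
      frE f (xb + p.1 • p.2) (u + α • (xb - (xb + p.1 • p.2))) < (r' : EReal) :=
    eventually_lt_of_limsup_lt hcon
  rw [Filter.eventually_prod_iff] at hev
  obtain ⟨pa, hpa, pb, hpb, hH⟩ := hev
  rw [(nhdsGT_basis (0:ℝ)).eventually_iff] at hpa
  obtain ⟨ε₁, hε₁, hpa'⟩ := hpa
  have hpbu : pb u := hpb.self_of_nhds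
  obtain ⟨m, hm1, hm2⟩ := exists_between hr'r
  set β : ℝ := α + 1 with hβ
  have hβ0 : 0 < β := by dsimp [β]; linarith
  have hmr' : 0 < m - r' := by linarith
  set ε : ℝ := min ε₁ (min (1/β) ((m - r')/(β*(|m|+1)))) with hε
  have hε0 : 0 < ε := by
    refine lt_min hε₁ (lt_min (by positivity) (by positivity))
  have hεβ : ε ≤ 1/β := le_trans (min_le_right _ _) (min_le_left _ _)
  have hεm : ε ≤ (m - r')/(β*(|m|+1)) := le_trans (min_le_right _ _) (min_le_right _ _)
  -- find s with quotient > r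
  have hfreq : ∃ᶠ t in nhdsWithin (0:ℝ) (Set.Ioi 0),
      (r:EReal) < (f (xb + t • u) - f xb) * ((t⁻¹:ℝ):EReal) :=
    frequently_lt_of_lt_limsup (by isBoundedDefault) hr
  rw [(nhdsGT_basis (0:ℝ)).frequently_iff] at hfreq
  obtain ⟨s, ⟨hs0, hsε⟩, hQs⟩ := hfreq ε hε0
  have hrm : 0 < r - m := by linarith
  have hφs : ((r * s + a0 : ℝ) : EReal) < f (xb + s • u) := by
    rw [lt_quot_iff hs0, hfa0] at hQs
    have h2 := (EReal.lt_sub_iff_add_lt (Or.inl (EReal.coe_ne_bot a0))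
      (Or.inl (EReal.coe_ne_top a0))).1 hQs
    rwa [← EReal.coe_add] at h2
  set δ : ℝ := (r - m) * s / 2 with hδ
  have hδ0 : 0 < δ := by positivity
  set τ : ℝ := min (s/2) ((r - m) * s / (2*(|m|+1))) with hτ
  have hτ0 : 0 < τ := lt_min (by linarith) (by positivity)
  have hliminf : Filter.liminf (fun t : ℝ => f (xb + t • u)) (nhdsWithin 0 (Set.Ioi 0))
      < ((a0 + δ : ℝ):EReal) := by
    rw [← hlim, hfa0]
    exact_mod_cast (by linarith : a0 < a0 + δ)
  have hfreq2 := frequently_lt_of_liminf_lt (by isBoundedDefault) hliminf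
  rw [(nhdsGT_basis (0:ℝ)).frequently_iff] at hfreq2
  obtain ⟨t₀, ⟨ht₀0, ht₀τ⟩, ht₀⟩ := hfreq2 τ hτ0
  have ht₀s : t₀ < s := lt_of_lt_of_le ht₀τ (le_trans (min_le_left _ _) (by linarith))
  have ht₀m : t₀ ≤ (r - m) * s / (2*(|m|+1)) := le_of_lt (lt_of_lt_of_le ht₀τ (min_le_right _ _))
  -- mean value on [t₀, s]
  have hφlsc : LowerSemicontinuous (fun t : ℝ => f (xb + t • u)) :=
    hlsc.comp (continuous_const.add (continuous_id.smul continuous_const))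
  have hslope : f (xb + t₀ • u) + ((m * (s - t₀) : ℝ):EReal) < f (xb + s • u) := by
    have hreal : a0 + δ + m * (s - t₀) ≤ r * s + a0 := by
      have h1 : -(m * t₀) ≤ |m| * t₀ := by nlinarith [neg_abs_le m, ht₀0.le]
      have h2 : |m| * t₀ ≤ |m| * ((r - m) * s / (2*(|m|+1))) :=
        mul_le_mul_of_nonneg_left ht₀m (abs_nonneg m)
      have h3 : |m| * ((r - m) * s / (2*(|m|+1))) ≤ (r - m) * s / 2 := by
        rw [← mul_div_assoc, div_le_div_iff₀ (by positivity : (0:ℝ) < 2*(|m|+1))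
          (by norm_num : (0:ℝ) < 2)]
        nlinarith [abs_nonneg m, mul_pos hrm hs0]
      simp only [hδ]
      nlinarith
    calc f (xb + t₀ • u) + ((m * (s - t₀) : ℝ):EReal)
        ≤ ((a0 + δ : ℝ):EReal) + ((m * (s - t₀) : ℝ):EReal) := add_le_add_left ht₀.le _
      _ = ((a0 + δ + m * (s - t₀) : ℝ):EReal) := by rw [← EReal.coe_add]
      _ ≤ ((r * s + a0 : ℝ):EReal) := by exact_mod_cast hreal
      _ < f (xb + s • u) := hφs
  obtain ⟨c, hct₀, hcs, hgc_top, hliminfc⟩ :=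
    mvt_ereal (fun t : ℝ => f (xb + t • u)) hφlsc (fun t => hbot _) ht₀s
      (ne_top_of_lt ht₀) hslope
  have hc0 : 0 < c := lt_of_lt_of_le ht₀0 hct₀
  have hcε : c < ε := lt_trans hcs hsε
  -- scale
  have hk0 : 0 < 1 - α * c := by
    have h1 : α * c ≤ β * c := mul_le_mul_of_nonneg_right (by dsimp [β]; linarith) hc0.le
    have h2 : β * c < β * ε := (mul_lt_mul_iff_right₀ hβ0).2 hcε
    have h3 : β * ε ≤ 1 := by
      calc β * ε ≤ β * (1/β) := (mul_le_mul_iff_right₀ hβ0).2 hεβ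
        _ = 1 := by field_simp
    linarith
  have heq : (fun t : ℝ => (f ((xb + c • u) + t • u) - f (xb + c • u)) * ((t⁻¹:ℝ):EReal))
      = fun t : ℝ => (f (xb + (c + t) • u) - f (xb + c • u)) * ((t⁻¹:ℝ):EReal) := by
    funext t
    rw [add_assoc, ← add_smul]
  have hlem : (((1 - α * c) * m : ℝ):EReal) ≤ frE f (xb + c • u) ((1 - α * c) • u) := by
    rw [frE, if_neg hgc_top]
    exact frE_scale_aux f hk0 (by rw [heq]; exact hliminfc)
  have hdir : u + α • (xb - (xb + c • u)) = (1 - α * c) • u := by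
    rw [sub_add_cancel_left, smul_neg, smul_smul, sub_smul, one_smul, ← sub_eq_add_neg]
  have hr'km : r' ≤ (1 - α * c) * m := by
    have hac0 : 0 ≤ α * c := mul_nonneg hα hc0.le
    have hβε0 : 0 ≤ β * ε := by positivity
    have hacβε : α * c ≤ β * ε :=
      le_trans (mul_le_mul_of_nonneg_right (by dsimp [β]; linarith) hc0.le)
        ((mul_lt_mul_iff_right₀ hβ0).2 hcε).le
    have h1a : α * c * |m| ≤ β * ε * |m| := mul_le_mul_of_nonneg_right hacβε (abs_nonneg m)
    have h1 : α * c * |m| ≤ β * ε * (|m| + 1) := by linarith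
    have h2 : β * ε * (|m| + 1) ≤ m - r' := by
      have hB : (0:ℝ) < β * (|m| + 1) := by positivity
      have h3 := (le_div_iff₀ hB).1 hεm
      linarith
    have h0 : α * c * m ≤ α * c * |m| := mul_le_mul_of_nonneg_left (le_abs_self m) hac0
    linarith
  have hfinal : (r' : EReal) ≤ frE f (xb + c • u) (u + α • (xb - (xb + c • u))) := by
    rw [hdir]
    exact le_trans (by exact_mod_cast hr'km) hlem
  exact absurd hfinal (not_le.2 (hH (hpa' ⟨hc0, lt_of_lt_of_le hcε (min_le_left _ _)⟩) hpbu))
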